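/- arXiv:2308.00496 — 3 statements merged into one kernel-verified Lean document; each statement's English description precedes it below -/
import Mathlib

section
/- Let τ ≥ 0, T > τ, b, c ∈ ℝ, and define the energy J(v) = ∫₀^T (v′(t) + b·v(t) + c·v(t−τ))² dt, where v(t) := 0 for t ∈ [−τ, 0]. There exists a constant C₁ > 0 such that J(v) ≥ C₁ ‖v‖²_{H¹(0,T)} for all v ∈ H¹(0, T) with v(0) = 0 and v(t) = 0 for t ∈ [T−τ, T]. -/
open MeasureTheory intervalIntegral

/-- Cauchy–Schwarz: `(∫₀ᵗ f)² ≤ t ∫₀ᵗ f²`. -/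
lemma cs_aux {f : ℝ → ℝ} {t : ℝ} (ht : 0 ≤ t)
    (hf : IntervalIntegrable f volume 0 t)
    (hf2 : IntervalIntegrable (fun s => f s ^ 2) volume 0 t) :
    (∫ s in (0:ℝ)..t, f s) ^ 2 ≤ t * ∫ s in (0:ℝ)..t, f s ^ 2 := by
  rcases eq_or_lt_of_le ht with h | h
  · simp [← h]
  · set I := ∫ s in (0:ℝ)..t, f s with hI
    set a : ℝ := I / t with ha
    have expand : ∫ s in (0:ℝ)..t, (f s - a) ^ 2
        = (∫ s in (0:ℝ)..t, f s ^ 2) - 2 * a * I + a ^ 2 * t := by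
      have h1 : ∀ s, (f s - a) ^ 2 = f s ^ 2 - (2 * a) * f s + a ^ 2 := by intro s; ring
      simp_rw [h1]
      rw [intervalIntegral.integral_add (hf2.sub (hf.const_mul (2*a)))
          intervalIntegrable_const,
        intervalIntegral.integral_sub hf2 (hf.const_mul (2*a)),
        intervalIntegral.integral_const_mul, intervalIntegral.integral_const]
      simp only [smul_eq_mul]
      field_simp
      ring
    have hnn : 0 ≤ ∫ s in (0:ℝ)..t, (f s - a) ^ 2 :=
      intervalIntegral.integral_nonneg ht (fun s _ => sq_nonneg _)
    rw [expand] at hnn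
    have hat : a * t = I := by rw [ha, div_mul_cancel₀ _ h.ne']
    nlinarith [sq_nonneg (a * t - I), mul_pos h h]

/-- Single-edge case of Lemma 6 (coercivity of the energy functional): there exists
`C₁ > 0` such that `J(v) = ∫₀ᵀ (v' + b v + c v(·-τ))² dt ≥ C₁ ‖v‖²_{H¹(0,T)}` for all
`v ∈ H¹(0,T)` with zero prehistory (`v = 0` on `[-τ,0]`, so `v(0)=0`) and `v = 0` on
`[T-τ, T]`. -/
theorem stmt_7 (τ T b c : ℝ) (hτ : 0 ≤ τ) (hT : τ < T) :
    ∃ C₁ > 0, ∀ v v' : ℝ → ℝ,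
      (∀ t, HasDerivAt v (v' t) t) →
      IntervalIntegrable (fun t => (v' t) ^ 2) volume 0 T →
      IntervalIntegrable (fun t => (v' t + b * v t + c * v (t - τ)) ^ 2) volume 0 T →
      (∀ t ∈ Set.Icc (-τ) (0 : ℝ), v t = 0) →
      (∀ t ∈ Set.Icc (T - τ) T, v t = 0) →
      (∫ t in (0:ℝ)..T, (v' t + b * v t + c * v (t - τ)) ^ 2)
        ≥ C₁ * ((∫ t in (0:ℝ)..T, (v t) ^ 2) + ∫ t in (0:ℝ)..T, (v' t) ^ 2) := by
  have hT0 : 0 < T := lt_of_le_of_lt hτ hT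
  set K0 : ℝ := 3*(b^2+c^2) with hK0def
  clear_value K0
  have hK0 : 0 ≤ K0 := by rw [hK0def]; positivity
  set K : ℝ := 3*(b^2+c^2)*T + 1 with hKdef
  clear_value K
  have hK1 : 1 ≤ K := by rw [hKdef]; nlinarith [sq_nonneg b, sq_nonneg c, hT0.le]
  have hKpos : 0 < K := by linarith
  set E : ℝ := Real.exp (K*T) with hEdef
  clear_value E
  have hEpos : 0 < E := by rw [hEdef]; exact Real.exp_pos _
  have hE1 : 1 ≤ E := by rw [hEdef]; exact Real.one_le_exp (by positivity)
  set A : ℝ := 3*(1+T)*(1+K0*T)*E with hAdef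
  clear_value A
  have hApos : 0 < A := by rw [hAdef]; positivity
  refine ⟨1/(2*A), by positivity, ?_⟩
  intro v v' hderiv hv'sq hwsq hpre _hpost
  set J : ℝ := ∫ t in (0:ℝ)..T, (v' t + b * v t + c * v (t - τ)) ^ 2 with hJdef
  clear_value J
  have hvc : Continuous v := by
    have : Differentiable ℝ v := fun t => (hderiv t).differentiableAt
    exact this.continuous
  have hv0 : v 0 = 0 := hpre 0 ⟨neg_nonpos.mpr hτ, le_rfl⟩
  have hv2c : Continuous (fun s => v s ^ 2) := hvc.pow 2
  have hvτc : Continuous (fun s => v (s - τ) ^ 2) :=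
    ((hvc.comp (continuous_id.sub continuous_const)).pow 2)
  have hv2int : ∀ p q : ℝ, IntervalIntegrable (fun s => v s ^ 2) volume p q :=
    fun p q => hv2c.intervalIntegrable p q
  have hv'eq : v' = deriv v := funext fun t => ((hderiv t).deriv).symm
  have hv'meas : Measurable v' := hv'eq ▸ measurable_deriv v
  have hv'int : IntervalIntegrable v' volume 0 T := by
    have hg : IntervalIntegrable (fun s => v' s ^ 2 + 1) volume 0 T :=
      hv'sq.add intervalIntegrable_const
    refine hg.mono_fun (hv'meas.aestronglyMeasurable.restrict) ?_
    refine Filter.Eventually.of_forall (fun s => ?_)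
    show ‖v' s‖ ≤ ‖v' s ^ 2 + 1‖
    have hnn : (0:ℝ) ≤ v' s ^ 2 + 1 := by positivity
    rw [Real.norm_eq_abs, Real.norm_eq_abs, abs_of_nonneg hnn]
    nlinarith [sq_abs (v' s), sq_nonneg (|v' s| - 1), abs_nonneg (v' s)]
  have hsubset : ∀ t ∈ Set.Icc (0:ℝ) T, Set.uIcc (0:ℝ) t ⊆ Set.uIcc (0:ℝ) T := by
    intro t ht
    rw [Set.uIcc_of_le ht.1, Set.uIcc_of_le hT0.le]
    exact Set.Icc_subset_Icc le_rfl ht.2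
  have hftc : ∀ t ∈ Set.Icc (0:ℝ) T, v t = ∫ s in (0:ℝ)..t, v' s := by
    intro t ht
    have heq := intervalIntegral.integral_eq_sub_of_hasDerivAt
      (f := v) (f' := v') (fun s _ => hderiv s) (hv'int.mono_set (hsubset t ht))
    rw [heq, hv0, sub_zero]
  set G : ℝ → ℝ := fun t => ∫ s in (0:ℝ)..t, v s ^ 2 with hGdef
  clear_value G
  have hGeq : ∀ t, G t = ∫ s in (0:ℝ)..t, v s ^ 2 := by
    intro t; rw [hGdef]
  have hGnn : ∀ t, 0 ≤ t → 0 ≤ G t := by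
    intro t ht
    rw [hGeq]
    exact intervalIntegral.integral_nonneg ht (fun s _ => sq_nonneg _)
  have hG0 : G 0 = 0 := by rw [hGeq]; exact intervalIntegral.integral_same
  have hGderiv : ∀ t, HasDerivAt G (v t ^ 2) t := by
    intro t
    rw [hGdef]
    exact intervalIntegral.integral_hasDerivAt_right (hv2int 0 t)
      (hv2c.stronglyMeasurableAtFilter volume (nhds t)) hv2c.continuousAt
  have hJnn : 0 ≤ J := by
    rw [hJdef]; exact intervalIntegral.integral_nonneg hT0.le (fun s _ => sq_nonneg _)
  -- shift bound
  have hshift : ∀ t ∈ Set.Icc (0:ℝ) T, (∫ s in (0:ℝ)..t, v (s - τ) ^ 2) ≤ G t := by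
    intro t ht
    rw [hGeq]
    have hcomp : (∫ s in (0:ℝ)..t, v (s - τ) ^ 2) = ∫ u in (-τ)..(t - τ), v u ^ 2 := by
      have h := intervalIntegral.integral_comp_sub_right (a := 0) (b := t)
        (fun u => v u ^ 2) τ
      simpa using h
    rw [hcomp]
    rcases le_total t τ with hcase | hcase
    · have hz : ∫ u in (-τ)..(t - τ), v u ^ 2 = 0 := by
        have hzz : ∀ u ∈ Set.uIcc (-τ) (t - τ), v u ^ 2 = (0 : ℝ) := by
          intro u hu
          rw [Set.uIcc_of_le (by linarith [ht.1])] at hu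
          have := hpre u ⟨hu.1, by linarith [hu.2]⟩
          simp [this]
        rw [intervalIntegral.integral_congr hzz]
        simp
      rw [hz]; exact intervalIntegral.integral_nonneg ht.1 (fun s _ => sq_nonneg _)
    · have h1 : ∫ u in (-τ)..(0:ℝ), v u ^ 2 = 0 := by
        have hzz : ∀ u ∈ Set.uIcc (-τ) (0:ℝ), v u ^ 2 = (0 : ℝ) := by
          intro u hu
          rw [Set.uIcc_of_le (neg_nonpos.mpr hτ)] at hu
          have := hpre u hu
          simp [this]
        rw [intervalIntegral.integral_congr hzz]
        simp
      have hsplit : ∫ u in (-τ)..(t - τ), v u ^ 2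
          = (∫ u in (-τ)..(0:ℝ), v u ^ 2) + ∫ u in (0:ℝ)..(t - τ), v u ^ 2 :=
        (intervalIntegral.integral_add_adjacent_intervals (hv2int _ _) (hv2int _ _)).symm
      rw [hsplit, h1, zero_add]
      exact intervalIntegral.integral_mono_interval le_rfl (by linarith) (by linarith)
        (Filter.Eventually.of_forall fun s => sq_nonneg _) (hv2int 0 t)
  -- energy bound for the derivative term
  have hF : ∀ t ∈ Set.Icc (0:ℝ) T, (∫ s in (0:ℝ)..t, v' s ^ 2) ≤ 3*J + K0 * G t := by
    intro t ht
    have Int1 : IntervalIntegrable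
        (fun s => 3 * (v' s + b * v s + c * v (s - τ)) ^ 2) volume 0 t :=
      (hwsq.mono_set (hsubset t ht)).const_mul 3
    have Int2 : IntervalIntegrable (fun s => 3*b^2 * v s ^ 2) volume 0 t :=
      (hv2int 0 t).const_mul _
    have Int3 : IntervalIntegrable (fun s => 3*c^2 * v (s - τ) ^ 2) volume 0 t :=
      (hvτc.intervalIntegrable 0 t).const_mul _
    have hptwise : ∀ s ∈ Set.Icc (0:ℝ) t, v' s ^ 2
        ≤ 3 * (v' s + b * v s + c * v (s - τ)) ^ 2 + 3*b^2 * v s ^ 2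
          + 3*c^2 * v (s - τ) ^ 2 := by
      intro s _
      nlinarith [sq_nonneg (v' s + b * v s + c * v (s - τ) + b * v s),
        sq_nonneg (v' s + b * v s + c * v (s - τ) + c * v (s - τ)),
        sq_nonneg (b * v s - c * v (s - τ))]
    have hmono := intervalIntegral.integral_mono_on ht.1
      (hv'sq.mono_set (hsubset t ht)) ((Int1.add Int2).add Int3) hptwise
    have hsplit : (∫ s in (0:ℝ)..t, (3 * (v' s + b * v s + c * v (s - τ)) ^ 2
          + 3*b^2 * v s ^ 2 + 3*c^2 * v (s - τ) ^ 2))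
        = 3 * (∫ s in (0:ℝ)..t, (v' s + b * v s + c * v (s - τ)) ^ 2)
          + 3*b^2 * (∫ s in (0:ℝ)..t, v s ^ 2)
          + 3*c^2 * (∫ s in (0:ℝ)..t, v (s - τ) ^ 2) := by
      rw [intervalIntegral.integral_add (Int1.add Int2) Int3,
        intervalIntegral.integral_add Int1 Int2,
        intervalIntegral.integral_const_mul, intervalIntegral.integral_const_mul,
        intervalIntegral.integral_const_mul]
    have hwle : (∫ s in (0:ℝ)..t, (v' s + b * v s + c * v (s - τ)) ^ 2) ≤ J := by
      rw [hJdef]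
      exact intervalIntegral.integral_mono_interval le_rfl ht.1 ht.2
        (Filter.Eventually.of_forall fun s => sq_nonneg _) hwsq
    have hGt_eq : (∫ s in (0:ℝ)..t, v s ^ 2) = G t := (hGeq t).symm
    rw [hsplit, hGt_eq] at hmono
    have hsh := hshift t ht
    have hGt := hGnn t ht.1
    rw [hK0def]
    linarith [hmono, hwle, mul_le_mul_of_nonneg_left hsh (sq_nonneg c)]
  -- pointwise bound on v via Cauchy–Schwarz
  have hvp : ∀ t ∈ Set.Icc (0:ℝ) T, v t ^ 2 ≤ 3*T*J + (K - 1) * G t := by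
    intro t ht
    have h1 : v t ^ 2 ≤ t * ∫ s in (0:ℝ)..t, v' s ^ 2 := by
      rw [hftc t ht]
      exact cs_aux ht.1 (hv'int.mono_set (hsubset t ht)) (hv'sq.mono_set (hsubset t ht))
    have h2 := hF t ht
    have hGt := hGnn t ht.1
    have h3 : t * (∫ s in (0:ℝ)..t, v' s ^ 2) ≤ T * (3*J + K0 * G t) := by
      have h4 : t * (∫ s in (0:ℝ)..t, v' s ^ 2) ≤ t * (3*J + K0 * G t) :=
        mul_le_mul_of_nonneg_left h2 ht.1
      have h5 : t * (3*J + K0 * G t) ≤ T * (3*J + K0 * G t) :=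
        mul_le_mul_of_nonneg_right ht.2 (by positivity)
      linarith
    have hKm : K - 1 = K0 * T := by rw [hKdef, hK0def]; ring
    have h3' : T * (3*J + K0 * G t) = 3*T*J + (K - 1) * G t := by rw [hKm]; ring
    linarith
  -- Gronwall
  set C : ℝ := 3*J*T/K with hCdef
  clear_value C
  have hC0 : 0 ≤ C := by
    rw [hCdef]
    exact div_nonneg (mul_nonneg (mul_nonneg (by norm_num) hJnn) hT0.le) hKpos.le
  set ψ : ℝ → ℝ := fun t => Real.exp (-K*t) * (G t + C) with hψdef
  clear_value ψ
  have hψderiv : ∀ t, HasDerivAt ψ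
      (Real.exp (-K*t) * (-K) * (G t + C) + Real.exp (-K*t) * (v t ^ 2)) t := by
    intro t
    rw [hψdef]
    have h1 : HasDerivAt (fun s => Real.exp (-K*s)) (Real.exp (-K*t) * (-K)) t := by
      have := ((hasDerivAt_id t).const_mul (-K)).exp
      simpa [mul_comm] using this
    exact h1.mul ((hGderiv t).add_const C)
  have hψanti : AntitoneOn ψ (Set.Icc 0 T) := by
    apply antitoneOn_of_deriv_nonpos (convex_Icc 0 T)
    · have : Differentiable ℝ ψ := fun t => (hψderiv t).differentiableAt
      exact this.continuous.continuousOn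
    · intro x _
      exact ((hψderiv x).differentiableAt).differentiableWithinAt
    · intro x hx
      rw [interior_Icc] at hx
      rw [(hψderiv x).deriv]
      have hvx := hvp x ⟨hx.1.le, hx.2.le⟩
      have hGx := hGnn x hx.1.le
      have hKC : K * C = 3*J*T := by
        rw [hCdef, mul_comm, div_mul_cancel₀ _ (ne_of_gt hKpos)]
      have key : v x ^ 2 ≤ K * (G x + C) := by linarith [hvx, hKC, hGx]
      have hexp : (0:ℝ) < Real.exp (-K*x) := Real.exp_pos _
      linarith [mul_le_mul_of_nonneg_left key hexp.le]
  have hψTle : ψ T ≤ ψ 0 :=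
    hψanti ⟨le_rfl, hT0.le⟩ ⟨hT0.le, le_rfl⟩ hT0.le
  have hGT : G T ≤ 3*J*T*E := by
    have hψ0 : ψ 0 = C := by simp [hψdef, hG0]
    have hψT : ψ T = Real.exp (-K*T) * (G T + C) := by rw [hψdef]
    rw [hψT, hψ0] at hψTle
    have hexpE : Real.exp (-K*T) * E = 1 := by
      rw [hEdef, ← Real.exp_add]; norm_num
    have h6 : Real.exp (-K*T) * (G T + C) * E ≤ C * E :=
      mul_le_mul_of_nonneg_right hψTle hEpos.le
    have h7 : Real.exp (-K*T) * (G T + C) * E = G T + C := by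
      rw [mul_comm (Real.exp (-K*T)) (G T + C), mul_assoc, hexpE, mul_one]
    rw [h7] at h6
    have hCle : C ≤ 3*J*T := by
      rw [hCdef]
      exact div_le_self (mul_nonneg (mul_nonneg (by norm_num) hJnn) hT0.le) hK1
    have h8 : C * E ≤ 3*J*T*E := mul_le_mul_of_nonneg_right hCle hEpos.le
    linarith
  have hFT : (∫ s in (0:ℝ)..T, v' s ^ 2) ≤ 3*J + K0 * (3*J*T*E) := by
    have h9 := hF T ⟨hT0.le, le_rfl⟩
    linarith [mul_le_mul_of_nonneg_left hGT hK0]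
  -- conclusion
  have hGTeq : (∫ t in (0:ℝ)..T, v t ^ 2) = G T := (hGeq T).symm
  have hA1 : 3*T*E ≤ A := by
    rw [hAdef]
    linarith [hEpos.le, mul_nonneg (mul_nonneg hK0 hT0.le) hEpos.le,
      mul_nonneg (mul_nonneg (mul_nonneg hK0 hT0.le) hT0.le) hEpos.le]
  have hA2 : 3 + 3*K0*T*E ≤ A := by
    rw [hAdef]
    linarith [hE1, mul_nonneg hT0.le hEpos.le,
      mul_nonneg (mul_nonneg (mul_nonneg hK0 hT0.le) hT0.le) hEpos.le]
  have hsum : (∫ t in (0:ℝ)..T, v t ^ 2) + (∫ t in (0:ℝ)..T, v' t ^ 2) ≤ 2*A*J := by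
    rw [hGTeq]
    have e1 : G T ≤ A * J := by
      linarith [hGT, mul_le_mul_of_nonneg_left hA1 hJnn]
    have e2 : (∫ t in (0:ℝ)..T, v' t ^ 2) ≤ A * J := by
      linarith [hFT, mul_le_mul_of_nonneg_left hA2 hJnn]
    linarith [e1, e2]
  rw [ge_iff_le]
  have h10 : 1/(2*A) * ((∫ t in (0:ℝ)..T, v t ^ 2) + ∫ t in (0:ℝ)..T, v' t ^ 2)
      ≤ 1/(2*A) * (2*A*J) := mul_le_mul_of_nonneg_left hsum (by positivity)
  have h11 : 1/(2*A) * (2*A*J) = J := by field_simp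
  linarith
end

section
/- Let l₁, l₂ > 0 and g₁, f₁ ∈ L²(0, l₁), g₂, f₂ ∈ L²(0, l₂). Suppose that ∫₀^{l₁} g₁ v₁′ + ∫₀^{l₁} f₁ v₁ + ∫₀^{l₂} g₂ v₂′ + ∫₀^{l₂} f₂ v₂ = 0 for all v₁ ∈ H¹(0,l₁), v₂ ∈ H¹(0,l₂) with v₁(0) = 0, v₂(0) = v₁(l₁), and v₂(l₂) = 0. Then g₁ ∈ H¹(0,l₁), g₂ ∈ H¹(0,l₂) with g₁′ = f₁, g₂′ = f₂ a.e., and moreover g₁(l₁) = g₂(0). -/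
open MeasureTheory intervalIntegral
open Set

lemma sq_to_int {l : ℝ} (hl : 0 ≤ l) {f : ℝ → ℝ}
    (hm : AEStronglyMeasurable f (volume.restrict (Set.Ioc (0:ℝ) l)))
    (h2 : IntervalIntegrable (fun t => (f t) ^ 2) volume 0 l) :
    IntervalIntegrable f volume 0 l := by
  rw [intervalIntegrable_iff_integrableOn_Ioc_of_le hl] at h2 ⊢
  have hvol : volume (Set.Ioc (0:ℝ) l) < ⊤ := by
    simp [Real.volume_Ioc, ENNReal.ofReal_lt_top]
  refine Integrable.mono' (g := fun t => (f t ^ 2 + 1)/2) ?_ hm ?_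
  · exact (h2.add (integrableOn_const hvol.ne)).div_const 2
  · refine Filter.Eventually.of_forall fun t => ?_
    have h0 : (|f t| - 1)^2 ≥ 0 := sq_nonneg _
    have : |f t| ≤ (|f t|^2 + 1)/2 := by nlinarith
    simpa [Real.norm_eq_abs, sq_abs] using this

lemma parts {l : ℝ} (hl : 0 < l) {f φ : ℝ → ℝ}
    (hf : IntervalIntegrable f volume 0 l) (hφ : IntervalIntegrable φ volume 0 l) :
    (∫ t in (0:ℝ)..l, f t * (∫ s in (0:ℝ)..t, φ s))
      = (∫ t in (0:ℝ)..l, f t) * (∫ t in (0:ℝ)..l, φ t)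
        - ∫ t in (0:ℝ)..l, (∫ s in (0:ℝ)..t, f s) * φ t := by
  have hl' : (0:ℝ) ≤ l := hl.le
  set I : Set ℝ := Set.Ioc (0:ℝ) l with hI
  set μ := volume.restrict I with hμ
  have hfI : Integrable f μ := (intervalIntegrable_iff_integrableOn_Ioc_of_le hl').1 hf
  have hφI : Integrable φ μ := (intervalIntegrable_iff_integrableOn_Ioc_of_le hl').1 hφ
  set S : Set (ℝ × ℝ) := {p : ℝ × ℝ | p.2 ≤ p.1} with hS
  have hSm : MeasurableSet S := measurableSet_le measurable_snd measurable_fst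
  set G : ℝ × ℝ → ℝ := S.indicator (fun p => f p.1 * φ p.2) with hG
  have hGint : Integrable G (μ.prod μ) := (hfI.mul_prod hφI).indicator hSm
  -- step 1 : LHS as iterated integral
  have step1 : (∫ t in (0:ℝ)..l, f t * (∫ s in (0:ℝ)..t, φ s))
      = ∫ t, (∫ s, G (t, s) ∂μ) ∂μ := by
    rw [intervalIntegral.integral_of_le hl']
    refine setIntegral_congr_fun measurableSet_Ioc fun t ht => ?_
    have h1 : (fun s => G (t, s)) = (Set.Iic t).indicator (fun s => f t * φ s) := by
      funext s
      by_cases h : s ≤ t <;> simp [hG, hS, Set.indicator, h]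
    rw [h1, MeasureTheory.integral_indicator measurableSet_Iic, hμ,
      Measure.restrict_restrict measurableSet_Iic]
    have h2 : Set.Iic t ∩ I = Set.Ioc 0 t := by
      ext s; simp only [Set.mem_inter_iff, Set.mem_Iic, hI, Set.mem_Ioc]
      constructor
      · rintro ⟨h1', h2', _⟩; exact ⟨h2', h1'⟩
      · rintro ⟨h1', h2'⟩; exact ⟨h2', h1', h2'.trans ht.2⟩
    rw [h2, MeasureTheory.integral_const_mul, ← intervalIntegral.integral_of_le ht.1.le]
  -- step 2 : swap
  have step2 : (∫ t, (∫ s, G (t, s) ∂μ) ∂μ) = ∫ s, (∫ t, G (t, s) ∂μ) ∂μ :=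
    MeasureTheory.integral_integral_swap (f := fun t s => G (t, s)) hGint
  -- step 3 : inner integral after swap
  have step3 : (∫ s, (∫ t, G (t, s) ∂μ) ∂μ)
      = ∫ s in (0:ℝ)..l, ((∫ t in (0:ℝ)..l, f t) - (∫ t in (0:ℝ)..s, f t)) * φ s := by
    rw [intervalIntegral.integral_of_le hl']
    refine setIntegral_congr_fun measurableSet_Ioc fun s hs => ?_
    have h1 : (fun t => G (t, s)) = (Set.Ici s).indicator (fun t => f t * φ s) := by
      funext t
      by_cases h : s ≤ t <;> simp [hG, hS, Set.indicator, h]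
    rw [h1, MeasureTheory.integral_indicator measurableSet_Ici, hμ,
      Measure.restrict_restrict measurableSet_Ici]
    have h2 : Set.Ici s ∩ I = Set.Icc s l := by
      ext t; simp only [Set.mem_inter_iff, Set.mem_Ici, hI, Set.mem_Ioc, Set.mem_Icc]
      constructor
      · rintro ⟨h1', _, h3'⟩; exact ⟨h1', h3'⟩
      · rintro ⟨h1', h2'⟩; exact ⟨h1', hs.1.trans_le h1', h2'⟩
    have hf0s : IntervalIntegrable f volume 0 s := by
      refine hf.mono_set (Set.uIcc_subset_uIcc Set.left_mem_uIcc ?_)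
      rw [Set.uIcc_of_le hl']
      exact ⟨hs.1.le, hs.2⟩
    rw [h2, MeasureTheory.integral_Icc_eq_integral_Ioc, MeasureTheory.integral_mul_const,
      ← intervalIntegral.integral_of_le hs.2,
      ← intervalIntegral.integral_interval_sub_left hf hf0s]
  -- step 4 : expand
  have hFφ : IntervalIntegrable (fun t => (∫ s in (0:ℝ)..t, f s) * φ t) volume 0 l := by
    exact hφ.continuousOn_mul
      (intervalIntegral.continuousOn_primitive_interval' hf Set.left_mem_uIcc)
  have step4 : (∫ s in (0:ℝ)..l, ((∫ t in (0:ℝ)..l, f t) - (∫ t in (0:ℝ)..s, f t)) * φ s)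
      = (∫ t in (0:ℝ)..l, f t) * (∫ t in (0:ℝ)..l, φ t)
        - ∫ t in (0:ℝ)..l, (∫ s in (0:ℝ)..t, f s) * φ t := by
    have : (fun s => ((∫ t in (0:ℝ)..l, f t) - (∫ t in (0:ℝ)..s, f t)) * φ s)
        = fun s => (∫ t in (0:ℝ)..l, f t) * φ s - (∫ t in (0:ℝ)..s, f t) * φ s := by
      funext s; ring
    rw [this, intervalIntegral.integral_sub ((hφ.const_mul _)) hFφ,
      intervalIntegral.integral_const_mul]
  rw [step1, step2, step3, step4]

lemma dbr {l : ℝ} (hl : 0 < l) {g f : ℝ → ℝ}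
    (hg : IntervalIntegrable g volume 0 l) (hf : IntervalIntegrable f volume 0 l)
    (H : ∀ v v' : ℝ → ℝ, (∀ t, HasDerivAt v (v' t) t) → Continuous v' → v 0 = 0 → v l = 0 →
      (∫ t in (0:ℝ)..l, g t * v' t) + (∫ t in (0:ℝ)..l, f t * v t) = 0) :
    ∃ C : ℝ, ∀ᵐ t ∂volume, t ∈ Set.Ioo (0:ℝ) l → g t = C + ∫ s in (0:ℝ)..t, f s := by
  have hl' : (0:ℝ) ≤ l := hl.le
  set F : ℝ → ℝ := fun t => ∫ s in (0:ℝ)..t, f s with hF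
  have hFcont : ContinuousOn F (Set.uIcc 0 l) :=
    intervalIntegral.continuousOn_primitive_interval' hf Set.left_mem_uIcc
  have hFint : IntervalIntegrable F volume 0 l := hFcont.intervalIntegrable
  set c : ℝ := (∫ t in (0:ℝ)..l, (g t - F t)) / l with hc
  refine ⟨c, ?_⟩
  set h : ℝ → ℝ := fun t => g t - F t - c with hh
  have hhint : IntervalIntegrable h volume 0 l :=
    (hg.sub hFint).sub (intervalIntegrable_const)
  -- key orthogonality against smooth compactly supported ψ
  have key : ∀ ψ : ℝ → ℝ, Continuous ψ →
      (∫ t in (0:ℝ)..l, h t * ψ t) = 0 := by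
    intro ψ hψcont
    have hψint : ∀ a b : ℝ, IntervalIntegrable ψ volume a b := fun a b =>
      hψcont.intervalIntegrable a b
    set a : ℝ := (∫ s in (0:ℝ)..l, ψ s) / l with ha
    set φ : ℝ → ℝ := fun t => ψ t - a with hφ
    have hφcont : Continuous φ := hψcont.sub continuous_const
    set v : ℝ → ℝ := fun t => (∫ s in (0:ℝ)..t, ψ s) - a * t with hv
    have hvderiv : ∀ t, HasDerivAt v (φ t) t := by
      intro t
      exact ((hψcont.integral_hasStrictDerivAt 0 t).hasDerivAt.sub
        ((hasDerivAt_id t).const_mul a)).congr_deriv (by ring)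
    have hv0 : v 0 = 0 := by simp [hv]
    have hvl : v l = 0 := by
      simp only [hv]
      rw [ha]
      field_simp
      ring
    have horth := H v φ hvderiv hφcont hv0 hvl
    -- v is the primitive of φ
    have hvprim : ∀ t : ℝ, v t = ∫ s in (0:ℝ)..t, φ s := by
      intro t
      rw [hv, hφ]
      rw [intervalIntegral.integral_sub (hψint 0 t) intervalIntegrable_const]
      simp only [intervalIntegral.integral_const, smul_eq_mul, sub_zero]
      ring
    have hφl : (∫ t in (0:ℝ)..l, φ t) = 0 := by
      rw [hφ, intervalIntegral.integral_sub (hψint 0 l) (intervalIntegrable_const)]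
      simp only [intervalIntegral.integral_const, smul_eq_mul, sub_zero]
      rw [ha]; field_simp; ring
    have hφint : IntervalIntegrable φ volume 0 l := hφcont.intervalIntegrable 0 l
    -- parts
    have hparts := parts hl hf hφint
    have hfv : (∫ t in (0:ℝ)..l, f t * v t) = - ∫ t in (0:ℝ)..l, F t * φ t := by
      have : (fun t => f t * v t) = fun t => f t * ∫ s in (0:ℝ)..t, φ s := by
        funext t; rw [hvprim t]
      rw [this, hparts, hφl]
      simp [hF]
    rw [hfv] at horth
    -- now ∫ (g - F) φ = 0
    have hgφ : IntervalIntegrable (fun t => g t * φ t) volume 0 l :=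
      hg.mul_continuousOn hφcont.continuousOn
    have hFφ : IntervalIntegrable (fun t => F t * φ t) volume 0 l :=
      hFint.mul_continuousOn hφcont.continuousOn
    have hgFφ : (∫ t in (0:ℝ)..l, (g t - F t) * φ t) = 0 := by
      have : (fun t => (g t - F t) * φ t) = fun t => g t * φ t - F t * φ t := by
        funext t; ring
      rw [this, intervalIntegral.integral_sub hgφ hFφ]
      linarith
    -- expand φ = ψ - a
    have hgFψ : IntervalIntegrable (fun t => (g t - F t) * ψ t) volume 0 l :=
      (hg.sub hFint).mul_continuousOn hψcont.continuousOn
    have hgFc : (∫ t in (0:ℝ)..l, (g t - F t) * ψ t)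
        = c * ∫ t in (0:ℝ)..l, ψ t := by
      have hsplit : (fun t => (g t - F t) * φ t)
          = fun t => (g t - F t) * ψ t - (g t - F t) * a := by
        funext t; rw [hφ]; ring
      rw [hsplit] at hgFφ
      rw [intervalIntegral.integral_sub hgFψ ((hg.sub hFint).mul_const a)] at hgFφ
      have h2 : (∫ t in (0:ℝ)..l, (g t - F t) * a) = c * l * a := by
        rw [intervalIntegral.integral_mul_const, hc]
        field_simp
      rw [h2] at hgFφ
      have hl0 : l ≠ 0 := hl.ne'
      have h3 : c * l * a = c * ∫ t in (0:ℝ)..l, ψ t := by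
        rw [ha]; field_simp
      linarith
    have hhψ : (fun t => h t * ψ t) = fun t => (g t - F t) * ψ t - c * ψ t := by
      funext t; rw [hh]; ring
    rw [hhψ, intervalIntegral.integral_sub hgFψ ((hψint 0 l).const_mul c),
      intervalIntegral.integral_const_mul, hgFc, sub_self]
  -- apply the distribution lemma on the open set Ioo 0 l
  have hloc : LocallyIntegrableOn h (Set.Ioo 0 l) volume := by
    refine IntegrableOn.locallyIntegrableOn ?_
    exact ((intervalIntegrable_iff_integrableOn_Ioc_of_le hl').1 hhint).mono_set
      Set.Ioo_subset_Ioc_self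
  have := (isOpen_Ioo (a := (0:ℝ)) (b := l)).ae_eq_zero_of_integral_contDiff_smul_eq_zero
    hloc ?_
  · filter_upwards [this] with t ht htI
    have := ht htI
    rw [hh] at this
    have : g t - F t - c = 0 := this
    rw [hF] at this
    linarith
  · intro ψ hψ hψc hψsupp
    have hzero : ∀ x, x ∉ Set.Ioo (0:ℝ) l → ψ x • h x = 0 := by
      intro x hx
      have : ψ x = 0 := by
        by_contra hne
        exact hx (hψsupp (subset_tsupport ψ (by simpa using hne)))
      simp [this]
    rw [← MeasureTheory.setIntegral_eq_integral_of_forall_compl_eq_zero hzero]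
    have : (∫ x in Set.Ioo (0:ℝ) l, ψ x • h x) = ∫ x in Set.Ioc (0:ℝ) l, ψ x • h x :=
      (MeasureTheory.integral_Ioc_eq_integral_Ioo).symm
    rw [this, ← intervalIntegral.integral_of_le hl']
    have : (fun x => ψ x • h x) = fun x => h x * ψ x := by
      funext x; simp [smul_eq_mul, mul_comm]
    rw [show (∫ x in (0:ℝ)..l, ψ x • h x) = ∫ x in (0:ℝ)..l, h x * ψ x from by
      simp_rw [smul_eq_mul, mul_comm]]
    exact key ψ hψ.continuous

lemma int_of_ae {l C : ℝ} (hl : 0 < l) {g f : ℝ → ℝ}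
    (hgi : IntervalIntegrable g volume 0 l)
    (hFi : IntervalIntegrable (fun t => ∫ s in (0:ℝ)..t, f s) volume 0 l)
    (hae : ∀ᵐ t ∂volume, t ∈ Set.Ioo (0:ℝ) l → g t = C + ∫ s in (0:ℝ)..t, f s) :
    (∫ t in (0:ℝ)..l, g t) = C * l + ∫ t in (0:ℝ)..l, (∫ s in (0:ℝ)..t, f s) := by
  have h1 : (∫ t in Set.Ioo (0:ℝ) l, g t)
      = ∫ t in Set.Ioo (0:ℝ) l, (C + ∫ s in (0:ℝ)..t, f s) :=
    setIntegral_congr_ae measurableSet_Ioo (hae.mono fun t h ht => h ht)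
  rw [intervalIntegral.integral_of_le hl.le, MeasureTheory.integral_Ioc_eq_integral_Ioo, h1,
    ← MeasureTheory.integral_Ioc_eq_integral_Ioo,
    ← intervalIntegral.integral_of_le hl.le,
    intervalIntegral.integral_add (intervalIntegrable_const) hFi,
    intervalIntegral.integral_const]
  simp [smul_eq_mul, mul_comm]


/-- Lemma 2 on a two-edge path graph (`m = 2`, `d = 1`): from the weak variational
identity tested against all `v₁ ∈ H¹(0,l₁)`, `v₂ ∈ H¹(0,l₂)` with `v₁(0) = 0`,
`v₂(0) = v₁(l₁)`, `v₂(l₂) = 0`, one gets `g₁ ∈ H¹(0,l₁)`, `g₂ ∈ H¹(0,l₂)` with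
`g₁' = f₁`, `g₂' = f₂` a.e., and the Kirchhoff-type matching `g₁(l₁) = g₂(0)`. -/
theorem stmt_10 (l₁ l₂ : ℝ) (hl₁ : 0 < l₁) (hl₂ : 0 < l₂)
    (g₁ f₁ g₂ f₂ : ℝ → ℝ)
    (hg₁ : AEStronglyMeasurable g₁ (volume.restrict (Set.Ioc (0:ℝ) l₁)))
    (hg₁2 : IntervalIntegrable (fun t => (g₁ t) ^ 2) volume 0 l₁)
    (hf₁ : AEStronglyMeasurable f₁ (volume.restrict (Set.Ioc (0:ℝ) l₁)))
    (hf₁2 : IntervalIntegrable (fun t => (f₁ t) ^ 2) volume 0 l₁)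
    (hg₂ : AEStronglyMeasurable g₂ (volume.restrict (Set.Ioc (0:ℝ) l₂)))
    (hg₂2 : IntervalIntegrable (fun t => (g₂ t) ^ 2) volume 0 l₂)
    (hf₂ : AEStronglyMeasurable f₂ (volume.restrict (Set.Ioc (0:ℝ) l₂)))
    (hf₂2 : IntervalIntegrable (fun t => (f₂ t) ^ 2) volume 0 l₂)
    (horth : ∀ v₁ v₁' v₂ v₂' : ℝ → ℝ,
      (∀ t, HasDerivAt v₁ (v₁' t) t) →
      (∀ t, HasDerivAt v₂ (v₂' t) t) →
      IntervalIntegrable (fun t => (v₁' t) ^ 2) volume 0 l₁ →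
      IntervalIntegrable (fun t => (v₂' t) ^ 2) volume 0 l₂ →
      v₁ 0 = 0 → v₂ 0 = v₁ l₁ → v₂ l₂ = 0 →
      (∫ t in (0:ℝ)..l₁, g₁ t * v₁' t) + (∫ t in (0:ℝ)..l₁, f₁ t * v₁ t)
        + (∫ t in (0:ℝ)..l₂, g₂ t * v₂' t) + (∫ t in (0:ℝ)..l₂, f₂ t * v₂ t) = 0) :
    ∃ C₁ C₂ : ℝ,
      (∀ᵐ t ∂volume, t ∈ Set.Ioo (0:ℝ) l₁ → g₁ t = C₁ + ∫ s in (0:ℝ)..t, f₁ s) ∧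
      (∀ᵐ t ∂volume, t ∈ Set.Ioo (0:ℝ) l₂ → g₂ t = C₂ + ∫ s in (0:ℝ)..t, f₂ s) ∧
      C₁ + (∫ s in (0:ℝ)..l₁, f₁ s) = C₂ := by
  have hg₁i : IntervalIntegrable g₁ volume 0 l₁ := sq_to_int hl₁.le hg₁ hg₁2
  have hf₁i : IntervalIntegrable f₁ volume 0 l₁ := sq_to_int hl₁.le hf₁ hf₁2
  have hg₂i : IntervalIntegrable g₂ volume 0 l₂ := sq_to_int hl₂.le hg₂ hg₂2
  have hf₂i : IntervalIntegrable f₂ volume 0 l₂ := sq_to_int hl₂.le hf₂ hf₂2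
  -- edge 1
  obtain ⟨C₁, hC₁⟩ : ∃ C : ℝ, ∀ᵐ t ∂volume, t ∈ Set.Ioo (0:ℝ) l₁ →
      g₁ t = C + ∫ s in (0:ℝ)..t, f₁ s := by
    refine dbr hl₁ hg₁i hf₁i ?_
    intro v v' hderiv hcont hv0 hvl
    have E := horth v v' (fun _ => 0) (fun _ => 0) hderiv
      (fun t => hasDerivAt_const t 0)
      ((hcont.pow 2).intervalIntegrable 0 l₁)
      (by simpa using (intervalIntegrable_const (μ := volume) (a := (0:ℝ)) (b := l₂) (c := (0:ℝ)^2)))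
      hv0 hvl.symm rfl
    simpa using E
  -- edge 2
  obtain ⟨C₂, hC₂⟩ : ∃ C : ℝ, ∀ᵐ t ∂volume, t ∈ Set.Ioo (0:ℝ) l₂ →
      g₂ t = C + ∫ s in (0:ℝ)..t, f₂ s := by
    refine dbr hl₂ hg₂i hf₂i ?_
    intro v v' hderiv hcont hv0 hvl
    have E := horth (fun _ => 0) (fun _ => 0) v v'
      (fun t => hasDerivAt_const t 0) hderiv
      (by simpa using (intervalIntegrable_const (μ := volume) (a := (0:ℝ)) (b := l₁) (c := (0:ℝ)^2)))
      ((hcont.pow 2).intervalIntegrable 0 l₂)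
      rfl hv0 hvl
    simpa using E
  refine ⟨C₁, C₂, hC₁, hC₂, ?_⟩
  -- matching condition via linear test functions
  have hF₁i : IntervalIntegrable (fun t => ∫ s in (0:ℝ)..t, f₁ s) volume 0 l₁ :=
    (intervalIntegral.continuousOn_primitive_interval' hf₁i Set.left_mem_uIcc).intervalIntegrable
  have hF₂i : IntervalIntegrable (fun t => ∫ s in (0:ℝ)..t, f₂ s) volume 0 l₂ :=
    (intervalIntegral.continuousOn_primitive_interval' hf₂i Set.left_mem_uIcc).intervalIntegrable
  have hd₁ : ∀ t : ℝ, HasDerivAt (fun t : ℝ => t * (1/l₁)) (1/l₁) t := by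
    intro t
    simpa using (hasDerivAt_id t).mul_const (1/l₁)
  have hd₂ : ∀ t : ℝ, HasDerivAt (fun t : ℝ => 1 - t * (1/l₂)) (-(1/l₂)) t := by
    intro t
    simpa using ((hasDerivAt_id t).mul_const (1/l₂)).const_sub 1
  have E := horth (fun t => t * (1/l₁)) (fun _ => 1/l₁)
    (fun t => 1 - t * (1/l₂)) (fun _ => -(1/l₂))
    hd₁ hd₂ (intervalIntegrable_const) (intervalIntegrable_const)
    (by simp) (by field_simp; ring) (by field_simp; ring)
  -- rewrite the four integrals in E
  have ha₁ : (∫ t in (0:ℝ)..l₁, g₁ t * (1/l₁)) = (∫ t in (0:ℝ)..l₁, g₁ t) * (1/l₁) :=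
    intervalIntegral.integral_mul_const _ _
  have hb₁ : (∫ t in (0:ℝ)..l₁, g₁ t)
      = C₁ * l₁ + ∫ t in (0:ℝ)..l₁, (∫ s in (0:ℝ)..t, f₁ s) := int_of_ae hl₁ hg₁i hF₁i hC₁
  have hb₂ : (∫ t in (0:ℝ)..l₂, g₂ t)
      = C₂ * l₂ + ∫ t in (0:ℝ)..l₂, (∫ s in (0:ℝ)..t, f₂ s) := int_of_ae hl₂ hg₂i hF₂i hC₂
  have hc₁ : (∫ t in (0:ℝ)..l₁, f₁ t * (t * (1/l₁)))
      = (∫ t in (0:ℝ)..l₁, f₁ t) * (l₁ * (1/l₁))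
        - (∫ t in (0:ℝ)..l₁, (∫ s in (0:ℝ)..t, f₁ s)) * (1/l₁) := by
    have hp := parts hl₁ hf₁i (_root_.intervalIntegrable_const (c := 1/l₁))
    simp_rw [intervalIntegral.integral_const, smul_eq_mul, sub_zero] at hp
    rw [intervalIntegral.integral_mul_const] at hp
    exact hp
  have hc₂ : (∫ t in (0:ℝ)..l₂, f₂ t * (t * (1/l₂)))
      = (∫ t in (0:ℝ)..l₂, f₂ t) * (l₂ * (1/l₂))
        - (∫ t in (0:ℝ)..l₂, (∫ s in (0:ℝ)..t, f₂ s)) * (1/l₂) := by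
    have hp := parts hl₂ hf₂i (_root_.intervalIntegrable_const (c := 1/l₂))
    simp_rw [intervalIntegral.integral_const, smul_eq_mul, sub_zero] at hp
    rw [intervalIntegral.integral_mul_const] at hp
    exact hp
  have he₂ : (∫ t in (0:ℝ)..l₂, f₂ t * (1 - t * (1/l₂)))
      = (∫ t in (0:ℝ)..l₂, f₂ t) - ∫ t in (0:ℝ)..l₂, f₂ t * (t * (1/l₂)) := by
    have hsplit : (fun t => f₂ t * (1 - t * (1/l₂)))
        = fun t => f₂ t - f₂ t * (t * (1/l₂)) := by funext t; ring
    have hcont2 : Continuous fun t : ℝ => t * (1/l₂) := by continuity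
    rw [hsplit, intervalIntegral.integral_sub hf₂i (hf₂i.mul_continuousOn hcont2.continuousOn)]
  have ha₂ : (∫ t in (0:ℝ)..l₂, g₂ t * (-(1/l₂)))
      = (∫ t in (0:ℝ)..l₂, g₂ t) * (-(1/l₂)) :=
    intervalIntegral.integral_mul_const _ _
  rw [ha₁, ha₂, he₂, hc₂, hc₁, hb₁, hb₂] at E
  set A := ∫ t in (0:ℝ)..l₁, (∫ s in (0:ℝ)..t, f₁ s) with hA
  set B := ∫ t in (0:ℝ)..l₂, (∫ s in (0:ℝ)..t, f₂ s) with hB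
  set P := ∫ t in (0:ℝ)..l₁, f₁ t with hP
  set Q := ∫ t in (0:ℝ)..l₂, f₂ t with hQ
  have h1 : l₁ * (1/l₁) = 1 := by field_simp
  have h2 : l₂ * (1/l₂) = 1 := by field_simp
  rw [h1, h2] at E
  have hl₁0 : l₁ ≠ 0 := hl₁.ne'
  have hl₂0 : l₂ ≠ 0 := hl₂.ne'
  field_simp at E
  have h5 : (C₁ + P - C₂) * (l₁ * l₂ * l₂) = 0 := by linear_combination l₂ * E
  have h6 : l₁ * l₂ * l₂ ≠ 0 := by positivity
  rcases mul_eq_zero.1 h5 with h | h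
  · linarith
  · exact absurd h h6
end

section
/- Let τ ≥ 0, T > τ, b, c ∈ ℝ, and let 𝒲 = {v ∈ H¹(0,T) : v(0) = 0 and v = 0 on [T−τ, T]} with the convention v := 0 on [−τ, 0]. Define B(y, v) = ∫₀^T (y′ + b y + c y(·−τ))(v′ + b v + c v(·−τ)) dt on 𝒲 × 𝒲. Then B is an inner product on 𝒲, and the associated norm is equivalent to the H¹(0,T) norm on 𝒲. -/
open MeasureTheory intervalIntegral

set_option maxHeartbeats 1000000 in
/-- Single-edge case of Remark 4 (Lemmas 4 and 6 combined): on the admissible subspace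
`𝒲 = {v ∈ H¹(0,T) : v = 0 on [-τ,0] ∪ [T-τ,T]}`, the energy bilinear form
`B(v,v) = ∫₀ᵀ (v' + b v + c v(·-τ))² dt` is two-sidedly comparable to the `H¹(0,T)`
norm (hence is an inner product whose norm is equivalent to the `H¹` norm). -/
theorem stmt_14 (τ T b c : ℝ) (hτ : 0 ≤ τ) (hT : τ < T) :
    ∃ c₀ > 0, ∃ C₀ > 0, ∀ v v' : ℝ → ℝ,
      (∀ t, HasDerivAt v (v' t) t) →
      IntervalIntegrable (fun t => (v' t) ^ 2) volume 0 T →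
      IntervalIntegrable (fun t => (v' t + b * v t + c * v (t - τ)) ^ 2) volume 0 T →
      (∀ t ∈ Set.Icc (-τ) (0 : ℝ), v t = 0) →
      (∀ t ∈ Set.Icc (T - τ) T, v t = 0) →
      (c₀ * ((∫ t in (0:ℝ)..T, (v t) ^ 2) + ∫ t in (0:ℝ)..T, (v' t) ^ 2)
          ≤ ∫ t in (0:ℝ)..T, (v' t + b * v t + c * v (t - τ)) ^ 2) ∧
      ((∫ t in (0:ℝ)..T, (v' t + b * v t + c * v (t - τ)) ^ 2)
          ≤ C₀ * ((∫ t in (0:ℝ)..T, (v t) ^ 2) + ∫ t in (0:ℝ)..T, (v' t) ^ 2)) ∧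
      ((∫ t in (0:ℝ)..T, (v' t + b * v t + c * v (t - τ)) ^ 2) = 0 →
          ∀ t ∈ Set.Icc (0:ℝ) T, v t = 0) := by
  have hT0 : 0 < T := lt_of_le_of_lt hτ hT
  set K : ℝ := 4 * (b ^ 2 + c ^ 2) * T + 1 with hKdef
  have hKpos : 0 < K := by positivity
  refine ⟨(2 * (1 + T ^ 2) * Real.exp (K * T))⁻¹, by positivity,
    2 + 4 * b ^ 2 + 4 * c ^ 2 * T ^ 2 + 1, by positivity, ?_⟩
  intro v v' hd h2 hw2 hz0 hzT
  have hv0 : v 0 = 0 := hz0 0 ⟨neg_nonpos.mpr hτ, le_refl 0⟩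
  have hvcont : Continuous v := by
    rw [continuous_iff_continuousAt]; exact fun t => (hd t).continuousAt
  have hv'eq : v' = deriv v := funext fun t => ((hd t).deriv).symm
  have hv'meas : Measurable v' := hv'eq ▸ measurable_deriv v
  have hv'int : IntervalIntegrable v' volume 0 T := by
    refine (h2.add (_root_.intervalIntegrable_const (c := (1:ℝ)))).mono_fun
      hv'meas.aestronglyMeasurable.restrict (ae_of_all _ fun x => ?_)
    have h1 : |v' x| ≤ v' x ^ 2 + 1 := by nlinarith [sq_abs (v' x), abs_nonneg (v' x)]
    have h2 : (0:ℝ) ≤ v' x ^ 2 + 1 := by positivity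
    simpa [Real.norm_eq_abs, abs_of_nonneg h2] using h1
  have hsub : ∀ s t : ℝ, s ∈ Set.Icc (0:ℝ) T → t ∈ Set.Icc (0:ℝ) T →
      Set.uIcc s t ⊆ Set.uIcc (0:ℝ) T := fun s t hs ht =>
    Set.uIcc_subset_uIcc ((Set.uIcc_of_le hT0.le).symm ▸ hs)
      ((Set.uIcc_of_le hT0.le).symm ▸ ht)
  have h2' : ∀ {s t : ℝ}, s ∈ Set.Icc (0:ℝ) T → t ∈ Set.Icc (0:ℝ) T →
      IntervalIntegrable (fun r => v' r ^ 2) volume s t :=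
    fun hs ht => h2.mono_set (hsub _ _ hs ht)
  have hv'int' : ∀ {s t : ℝ}, s ∈ Set.Icc (0:ℝ) T → t ∈ Set.Icc (0:ℝ) T →
      IntervalIntegrable v' volume s t :=
    fun hs ht => hv'int.mono_set (hsub _ _ hs ht)
  have h0mem : (0:ℝ) ∈ Set.Icc (0:ℝ) T := ⟨le_refl 0, hT0.le⟩
  have hTmem : T ∈ Set.Icc (0:ℝ) T := ⟨hT0.le, le_refl T⟩
  set u : ℝ → ℝ := fun t => ∫ s in (0:ℝ)..t, v' s ^ 2 with hu_def
  have hunonneg : ∀ {t : ℝ}, 0 ≤ t → 0 ≤ u t := fun h0t =>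
    integral_nonneg h0t fun r _ => sq_nonneg _
  have humono : ∀ {s t : ℝ}, 0 ≤ s → s ≤ t → t ≤ T → u s ≤ u t := by
    intro s t h0s hst htT
    have hs : s ∈ Set.Icc (0:ℝ) T := ⟨h0s, hst.trans htT⟩
    have ht : t ∈ Set.Icc (0:ℝ) T := ⟨h0s.trans hst, htT⟩
    have hadd := integral_add_adjacent_intervals (h2' h0mem hs) (h2' hs ht)
    have hnn : 0 ≤ ∫ r in s..t, v' r ^ 2 := integral_nonneg hst fun r _ => sq_nonneg _
    have : u s + (∫ r in s..t, v' r ^ 2) = u t := hadd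
    linarith
  have hucont : ContinuousOn u (Set.Icc (0:ℝ) T) := by
    have := continuousOn_primitive_interval' h2 (Set.left_mem_uIcc (a := (0:ℝ)) (b := T))
    rwa [Set.uIcc_of_le hT0.le] at this
  have huint : ∀ {s t : ℝ}, s ∈ Set.Icc (0:ℝ) T → t ∈ Set.Icc (0:ℝ) T →
      IntervalIntegrable u volume s t := by
    intro s t hs ht
    exact (hucont.mono ((hsub s t hs ht).trans (Set.uIcc_of_le hT0.le).subset)).intervalIntegrable
  -- FTC
  have hFTC : ∀ {s : ℝ}, s ∈ Set.Icc (0:ℝ) T → (∫ r in (0:ℝ)..s, v' r) = v s := by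
    intro s hs
    rw [integral_eq_sub_of_hasDerivAt (fun x _ => hd x) (hv'int' h0mem hs), hv0, sub_zero]
  -- Cauchy–Schwarz
  have hCS : ∀ {s : ℝ}, s ∈ Set.Icc (0:ℝ) T → v s ^ 2 ≤ s * u s := by
    intro s hs
    rcases eq_or_lt_of_le hs.1 with h0 | h0
    · rw [← h0]; simp [hv0]
    · set I := ∫ r in (0:ℝ)..s, v' r with hI
      have hIv : I = v s := hFTC hs
      have hint1 : IntervalIntegrable v' volume 0 s := hv'int' h0mem ⟨h0.le, hs.2⟩
      have hint2 : IntervalIntegrable (fun r => v' r ^ 2) volume 0 s := h2' h0mem ⟨h0.le, hs.2⟩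
      have hnn : 0 ≤ ∫ r in (0:ℝ)..s, (v' r - I / s) ^ 2 :=
        integral_nonneg h0.le fun r _ => sq_nonneg _
      have expand : (∫ r in (0:ℝ)..s, (v' r - I / s) ^ 2)
          = u s - (2 * (I / s)) * I + (I / s) ^ 2 * s := by
        have hid : (fun r => (v' r - I / s) ^ 2)
            = fun r => (v' r ^ 2 - 2 * (I / s) * v' r) + (I / s) ^ 2 := by
          funext r; ring
        rw [hid, integral_add (hint2.sub (hint1.const_mul _)) _root_.intervalIntegrable_const,
          integral_sub hint2 (hint1.const_mul _), intervalIntegral.integral_const_mul, intervalIntegral.integral_const]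
        simp only [smul_eq_mul, sub_zero, hu_def]
        ring
      have key : I ^ 2 / s ≤ u s := by
        have h1 : (2 * (I / s)) * I - (I / s) ^ 2 * s = I ^ 2 / s := by
          field_simp; ring
        linarith [expand ▸ hnn]
      have := (div_le_iff₀ h0).1 key
      calc v s ^ 2 = I ^ 2 := by rw [hIv]
        _ ≤ u s * s := this
        _ = s * u s := mul_comm _ _
  have hCSτ : ∀ {s : ℝ}, s ∈ Set.Icc (0:ℝ) T → v (s - τ) ^ 2 ≤ s * u s := by
    intro s hs
    rcases le_or_gt (s - τ) 0 with h | h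
    · rw [hz0 (s - τ) ⟨by linarith [hs.1], h⟩]
      simpa using mul_nonneg hs.1 (hunonneg hs.1)
    · have hm : s - τ ∈ Set.Icc (0:ℝ) T := ⟨h.le, by linarith [hs.2]⟩
      have h1 := hCS hm
      have h2 := humono h.le (by linarith) hs.2
      have h3 := hunonneg h.le
      nlinarith
  set Q : ℝ := ∫ t in (0:ℝ)..T, (v' t + b * v t + c * v (t - τ)) ^ 2 with hQdef
  have hQnn : 0 ≤ Q := integral_nonneg hT0.le fun r _ => sq_nonneg _
  have hwint : ∀ {s t : ℝ}, s ∈ Set.Icc (0:ℝ) T → t ∈ Set.Icc (0:ℝ) T →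
      IntervalIntegrable (fun r => (v' r + b * v r + c * v (r - τ)) ^ 2) volume s t :=
    fun hs ht => hw2.mono_set (hsub _ _ hs ht)
  have hQpartial : ∀ {t : ℝ}, t ∈ Set.Icc (0:ℝ) T →
      (∫ s in (0:ℝ)..t, (v' s + b * v s + c * v (s - τ)) ^ 2) ≤ Q := by
    intro t ht
    have hadd := integral_add_adjacent_intervals (hwint h0mem ht) (hwint ht hTmem)
    have hnn : 0 ≤ ∫ r in t..T, (v' r + b * v r + c * v (r - τ)) ^ 2 :=
      integral_nonneg ht.2 fun r _ => sq_nonneg _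
    linarith [hadd]
  -- pointwise bound for the derivative
  have hpt : ∀ s ∈ Set.Icc (0:ℝ) T,
      v' s ^ 2 ≤ 2 * (v' s + b * v s + c * v (s - τ)) ^ 2 + K * u s := by
    intro s hs
    have h1 := hCS hs
    have h2 := hCSτ hs
    have h3 : s * u s ≤ T * u s := mul_le_mul_of_nonneg_right hs.2 (hunonneg hs.1)
    have h4 := hunonneg hs.1
    have e1 : b ^ 2 * (v s) ^ 2 ≤ b ^ 2 * (T * u s) :=
      mul_le_mul_of_nonneg_left (h1.trans h3) (sq_nonneg b)
    have e2 : c ^ 2 * (v (s - τ)) ^ 2 ≤ c ^ 2 * (T * u s) :=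
      mul_le_mul_of_nonneg_left (h2.trans h3) (sq_nonneg c)
    have key : v' s ^ 2 ≤ 2 * (v' s + b * v s + c * v (s - τ)) ^ 2
        + 4 * (b ^ 2 * (v s) ^ 2) + 4 * (c ^ 2 * (v (s - τ)) ^ 2) := by
      nlinarith [sq_nonneg ((v' s + b * v s + c * v (s - τ)) + (b * v s + c * v (s - τ))),
        sq_nonneg (b * v s - c * v (s - τ))]
    have : v' s ^ 2 ≤ 2 * (v' s + b * v s + c * v (s - τ)) ^ 2
        + 4 * (b ^ 2 + c ^ 2) * T * u s := by nlinarith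
    nlinarith [this, h4]
  -- integral inequality u t ≤ U t
  set U : ℝ → ℝ := fun t => 2 * Q + K * ∫ s in (0:ℝ)..t, u s with hU_def
  have hule : ∀ t ∈ Set.Icc (0:ℝ) T, u t ≤ U t := by
    intro t ht
    have hrhs : IntervalIntegrable
        (fun s => 2 * (v' s + b * v s + c * v (s - τ)) ^ 2 + K * u s) volume 0 t :=
      ((hwint h0mem ht).const_mul 2).add ((huint h0mem ht).const_mul K)
    have step1 : u t ≤ ∫ s in (0:ℝ)..t,
        (2 * (v' s + b * v s + c * v (s - τ)) ^ 2 + K * u s) := by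
      refine integral_mono_on ht.1 (h2' h0mem ht) hrhs fun x hx => ?_
      exact hpt x ⟨hx.1, hx.2.trans ht.2⟩
    have step2 : (∫ s in (0:ℝ)..t,
        (2 * (v' s + b * v s + c * v (s - τ)) ^ 2 + K * u s))
        = 2 * (∫ s in (0:ℝ)..t, (v' s + b * v s + c * v (s - τ)) ^ 2)
          + K * ∫ s in (0:ℝ)..t, u s := by
      rw [integral_add ((hwint h0mem ht).const_mul 2) ((huint h0mem ht).const_mul K),
        intervalIntegral.integral_const_mul, intervalIntegral.integral_const_mul]
    have := hQpartial ht
    simp only [hU_def]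
    linarith [step1, step2 ▸ step1]
  have hUcont : ContinuousOn U (Set.Icc (0:ℝ) T) := by
    have hprim : ContinuousOn (fun t => ∫ s in (0:ℝ)..t, u s) (Set.Icc (0:ℝ) T) := by
      have := continuousOn_primitive_interval' (huint h0mem hTmem)
        (Set.left_mem_uIcc (a := (0:ℝ)) (b := T))
      rwa [Set.uIcc_of_le hT0.le] at this
    exact continuousOn_const.add (continuousOn_const.mul hprim)
  have hUderiv : ∀ x ∈ Set.Ico (0:ℝ) T, HasDerivWithinAt U (K * u x) (Set.Ici x) x := by
    intro x hx
    have hmem : Set.Icc (0:ℝ) T ∈ nhdsWithin x (Set.Ioi x) :=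
      Filter.mem_of_superset (Ioo_mem_nhdsGT_of_mem ⟨le_refl x, hx.2⟩)
        (fun y hy => ⟨hx.1.trans hy.1.le, hy.2.le⟩)
    have hprim : HasDerivWithinAt (fun t => ∫ s in (0:ℝ)..t, u s) (u x) (Set.Ici x) x := by
      refine integral_hasDerivWithinAt_right (huint h0mem ⟨hx.1, hx.2.le⟩)
        ⟨Set.Icc (0:ℝ) T, hmem, hucont.aestronglyMeasurable measurableSet_Icc⟩ ?_
      exact (hucont.continuousWithinAt ⟨hx.1, hx.2.le⟩).mono_of_mem_nhdsWithin hmem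
    exact ((hprim.const_mul K).const_add (2 * Q))
  have hgron := norm_le_gronwallBound_of_norm_deriv_right_le (f := U)
    (f' := fun x => K * u x) (δ := 2 * Q) (K := K) (ε := 0) hUcont hUderiv
    (by
      have : U 0 = 2 * Q := by simp [hU_def]
      rw [this, Real.norm_eq_abs, abs_of_nonneg (by linarith)])
    (by
      intro x hx
      have h1 : u x ≤ U x := hule x ⟨hx.1, hx.2.le⟩
      have h2 : U x ≤ ‖U x‖ := le_abs_self _
      have h3 : 0 ≤ u x := hunonneg hx.1
      rw [Real.norm_eq_abs, abs_of_nonneg (mul_nonneg hKpos.le h3)]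
      have := mul_le_mul_of_nonneg_left (h1.trans h2) hKpos.le
      linarith)
  have huT : u T ≤ 2 * Q * Real.exp (K * T) := by
    have h := hgron T hTmem
    rw [gronwallBound_ε0, sub_zero] at h
    have h1 : u T ≤ U T := hule T hTmem
    have h2 : U T ≤ ‖U T‖ := le_abs_self _
    linarith
  have huTnn : 0 ≤ u T := hunonneg hT0.le
  have hv2int : IntervalIntegrable (fun t => v t ^ 2) volume 0 T :=
    ((hvcont.pow 2).intervalIntegrable 0 T)
  have hIv2nn : 0 ≤ ∫ t in (0:ℝ)..T, v t ^ 2 := integral_nonneg hT0.le fun r _ => sq_nonneg _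
  have huT_eq : (∫ t in (0:ℝ)..T, v' t ^ 2) = u T := rfl
  have hIv2 : (∫ t in (0:ℝ)..T, v t ^ 2) ≤ T ^ 2 * u T := by
    have hmono : (∫ t in (0:ℝ)..T, v t ^ 2) ≤ ∫ _t in (0:ℝ)..T, T * u T := by
      refine integral_mono_on hT0.le hv2int _root_.intervalIntegrable_const fun x hx => ?_
      have h1 := hCS hx
      have h2 := humono hx.1 hx.2 (le_refl T)
      have h3 := hunonneg hx.1
      nlinarith [hx.2]
    rw [intervalIntegral.integral_const, smul_eq_mul, sub_zero] at hmono
    nlinarith [hmono]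
  -- coercivity
  have coer : (2 * (1 + T ^ 2) * Real.exp (K * T))⁻¹
      * ((∫ t in (0:ℝ)..T, v t ^ 2) + ∫ t in (0:ℝ)..T, v' t ^ 2) ≤ Q := by
    rw [inv_mul_le_iff₀ (by positivity)]
    have hexp : (1:ℝ) ≤ Real.exp (K * T) := by
      rw [← Real.exp_zero]; exact Real.exp_le_exp.2 (by positivity)
    rw [huT_eq]
    nlinarith [huT, hIv2, huTnn, hQnn, sq_nonneg T, Real.exp_pos (K * T)]
  refine ⟨coer, ?_, ?_⟩
  · -- upper bound
    have hτpt : ∀ s ∈ Set.Icc (0:ℝ) T, v (s - τ) ^ 2 ≤ T * u T := by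
      intro s hs
      have h1 := hCSτ hs
      have h2 := humono hs.1 hs.2 (le_refl T)
      have h3 := hunonneg hs.1
      nlinarith [hs.2]
    have hvpt : ∀ s ∈ Set.Icc (0:ℝ) T, v s ^ 2 ≤ T * u T := by
      intro s hs
      have h1 := hCS hs
      have h2 := humono hs.1 hs.2 (le_refl T)
      have h3 := hunonneg hs.1
      nlinarith [hs.2]
    have hrhs : IntervalIntegrable
        (fun s => 2 * v' s ^ 2 + 4 * (b ^ 2 * v s ^ 2) + 4 * (c ^ 2 * (T * u T)))
        volume 0 T :=
      ((h2.const_mul 2).add ((hv2int.const_mul _).const_mul 4)).add _root_.intervalIntegrable_const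
    have step1 : Q ≤ ∫ s in (0:ℝ)..T,
        (2 * v' s ^ 2 + 4 * (b ^ 2 * v s ^ 2) + 4 * (c ^ 2 * (T * u T))) := by
      refine integral_mono_on hT0.le hw2 hrhs fun x hx => ?_
      have h1 := hτpt x hx
      nlinarith [sq_nonneg ((v' x) - (b * v x + c * v (x - τ))),
        sq_nonneg (b * v x - c * v (x - τ)), sq_nonneg (c * v (x - τ)),
        mul_le_mul_of_nonneg_left h1 (sq_nonneg c)]
    have step2 : (∫ s in (0:ℝ)..T,
        (2 * v' s ^ 2 + 4 * (b ^ 2 * v s ^ 2) + 4 * (c ^ 2 * (T * u T))))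
        = 2 * u T + 4 * (b ^ 2 * ∫ s in (0:ℝ)..T, v s ^ 2) + 4 * (c ^ 2 * (T * u T)) * T := by
      rw [integral_add ((h2.const_mul 2).add ((hv2int.const_mul _).const_mul 4))
        _root_.intervalIntegrable_const,
        integral_add (h2.const_mul 2) ((hv2int.const_mul _).const_mul 4),
        intervalIntegral.integral_const_mul, intervalIntegral.integral_const_mul, intervalIntegral.integral_const_mul, intervalIntegral.integral_const]
      simp only [smul_eq_mul, sub_zero, huT_eq]
      ring
    rw [huT_eq]
    have step3 := step2 ▸ step1
    nlinarith [step3, hIv2nn, huTnn,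
      mul_nonneg (sq_nonneg b) huTnn, mul_nonneg (sq_nonneg b) hIv2nn,
      mul_nonneg (mul_nonneg (sq_nonneg c) (sq_nonneg T)) hIv2nn,
      mul_nonneg (mul_nonneg (sq_nonneg c) (sq_nonneg T)) huTnn]
  · -- definiteness
    intro hQ0 t ht
    have h0 : Q = 0 := hQ0
    have huT0 : u T = 0 := by
      have := coer
      rw [h0] at this
      have hc : (0:ℝ) < (2 * (1 + T ^ 2) * Real.exp (K * T))⁻¹ := by positivity
      rw [huT_eq] at this
      nlinarith [hIv2nn, huTnn]
    have h1 := hCS ht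
    have h2 := humono ht.1 ht.2 (le_refl T)
    have h3 := hunonneg ht.1
    have hv2 : v t ^ 2 ≤ 0 := by nlinarith [ht.1]
    have := sq_nonneg (v t)
    have : v t ^ 2 = 0 := le_antisymm hv2 this
    exact pow_eq_zero_iff two_ne_zero |>.mp this
end
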